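/- Let l be a non-negative even integer and s an integer with 0 ≤ s ≤ l such that gcd(2s+1, l+1) = 1. Then there exists a unique sequence (b_n)_{1≤n≤l+1} with values in {+1,-1}, extended (l+1)-periodically to all integers, satisfying: b_1 = 1; b_n = -b_{l+1-n} whenever n ≢ 0 (mod l+1); and b_{s-n} = b_{s+1+n} for all integers n. -/

import Mathlib

/-- The defining conditions of the (l+1)-periodic sequence (b_{l,s}(n)). -/
def IsB (l s : ℕ) (b : ℤ → ℤ) : Prop :=
  (∀ n : ℤ, b n = 1 ∨ b n = -1) ∧
  (∀ n : ℤ, b (n + ((l : ℤ) + 1)) = b n) ∧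
  b 1 = 1 ∧
  (∀ n : ℤ, ¬ ((l : ℤ) + 1) ∣ n → b n = - b ((l : ℤ) + 1 - n)) ∧
  (∀ n : ℤ, b ((s : ℤ) - n) = b ((s : ℤ) + 1 + n))

private def ff (k : ℤ) : ℤ := if k = 0 then 1 else (-1) ^ (k - 1).toNat

private lemma ff_pm (k : ℤ) : ff k = 1 ∨ ff k = -1 := by
  unfold ff
  split
  · left; rfl
  · rcases Nat.even_or_odd (k - 1).toNat with h | h
    · left; exact h.neg_one_pow
    · right; exact h.neg_one_pow

private lemma npow_odd {a b : ℕ} (h : Odd (a + b)) : (-1 : ℤ) ^ a = -(-1 : ℤ) ^ b := by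
  rcases Nat.even_or_odd a with ha | ha <;> rcases Nat.even_or_odd b with hb | hb
  · exact absurd h (Nat.not_odd_iff_even.mpr (ha.add hb))
  · rw [ha.neg_one_pow, hb.neg_one_pow]; try norm_num
  · rw [ha.neg_one_pow, hb.neg_one_pow]; try norm_num
  · exact absurd h (Nat.not_odd_iff_even.mpr (ha.add_odd hb))

private lemma npow_even {a b : ℕ} (h : Even (a + b)) : (-1 : ℤ) ^ a = (-1 : ℤ) ^ b := by
  rcases Nat.even_or_odd a with ha | ha <;> rcases Nat.even_or_odd b with hb | hb
  · rw [ha.neg_one_pow, hb.neg_one_pow]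
  · exact absurd h (Nat.not_even_iff_odd.mpr (ha.add_odd hb))
  · exact absurd h (Nat.not_even_iff_odd.mpr (ha.add_even hb))
  · rw [ha.neg_one_pow, hb.neg_one_pow]

theorem stmt8 (l s : ℕ) (hleven : Even l) (hs : s ≤ l)
    (hg : Nat.gcd (2 * s + 1) (l + 1) = 1) :
    ∃ b : ℤ → ℤ, IsB l s b ∧ ∀ b' : ℤ → ℤ, IsB l s b' → b' = b := by
  obtain ⟨t, ht⟩ := hleven
  set m : ℤ := (l : ℤ) + 1 with hm_def
  set d : ℤ := 2 * (s : ℤ) + 1 with hd_def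
  have hm0 : 0 < m := by omega
  have hmt : m = 2 * (t : ℤ) + 1 := by rw [hm_def]; push_cast [ht]; ring
  have hcop : IsCoprime d m := by
    rw [Int.isCoprime_iff_gcd_eq_one]
    have h1 : d = ((2 * s + 1 : ℕ) : ℤ) := by rw [hd_def]; push_cast; ring
    have h2 : m = ((l + 1 : ℕ) : ℤ) := by rw [hm_def]; push_cast; ring
    rw [h1, h2, Int.gcd_natCast_natCast]
    exact hg
  obtain ⟨u, v, huv⟩ := hcop
  set e : ℤ := u with he_def
  have hde : m ∣ d * e - 1 := ⟨-v, by linear_combination huv⟩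
  have hcop_me : IsCoprime m e := IsCoprime.symm ⟨d, v, by linear_combination huv⟩
  have hcop_md : IsCoprime m d := ⟨v, u, by linear_combination huv⟩
  have hdvd2 : ∀ x : ℤ, m ∣ x * e - (x * e % m) := fun x =>
    ⟨x * e / m, by have := Int.mul_ediv_add_emod (x * e) m; linarith⟩
  have hkey : ∀ x r : ℤ, 0 ≤ r → r < m → m ∣ x * e - r → x * e % m = r := by
    rintro x r h0 h1 ⟨c, hc⟩
    have hx : x * e = r + m * c := by linarith
    rw [hx, Int.add_mul_emod_self_left, Int.emod_eq_of_lt h0 h1]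
  have hrange : ∀ x : ℤ, 0 ≤ x * e % m ∧ x * e % m < m := fun x =>
    ⟨Int.emod_nonneg _ (by omega), Int.emod_lt_of_pos _ hm0⟩
  have hzero : ∀ x : ℤ, x * e % m = 0 ↔ m ∣ x := by
    intro x
    constructor
    · intro h
      exact hcop_me.dvd_of_dvd_mul_right (Int.dvd_of_emod_eq_zero h)
    · rintro ⟨c, rfl⟩
      rw [mul_assoc]
      exact Int.mul_emod_right m (c * e)
  refine ⟨fun n => ff (n * e % m) * ff (e % m), ⟨?_, ?_, ?_, ?_, ?_⟩, ?_⟩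
  · -- values ±1
    intro n
    rcases ff_pm (n * e % m) with h | h <;> rcases ff_pm (e % m) with h' | h' <;>
      simp [h, h']
  · -- periodicity
    intro n
    rw [← hm_def]
    show ff ((n + m) * e % m) * ff (e % m) = ff (n * e % m) * ff (e % m)
    obtain ⟨c, hc⟩ := hdvd2 n
    have hh : (n + m) * e % m = n * e % m :=
      hkey _ _ (hrange n).1 (hrange n).2 ⟨c + e, by linear_combination hc⟩
    rw [hh]
  · -- b 1 = 1
    show ff (1 * e % m) * ff (e % m) = 1
    rw [one_mul]
    rcases ff_pm (e % m) with h | h <;> rw [h] <;> norm_num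
  · -- antisymmetry
    intro n hn
    rw [← hm_def] at hn
    show ff (n * e % m) * ff (e % m) = -(ff ((m - n) * e % m) * ff (e % m))
    set r : ℤ := n * e % m with hr_def
    have hr0 : r ≠ 0 := fun h => hn ((hzero n).mp h)
    have hrb : 0 ≤ r ∧ r < m := hrange n
    obtain ⟨c, hc⟩ := hdvd2 n
    have hkm : (m - n) * e % m = m - r :=
      hkey _ _ (by omega) (by omega) ⟨e - c - 1, by linear_combination -hc⟩
    rw [hkm]
    have hff : ff (m - r) = - ff r := by
      have h1 : ff r = (-1 : ℤ) ^ (r - 1).toNat := by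
        rw [ff, if_neg hr0]
      have h2 : ff (m - r) = (-1 : ℤ) ^ (m - r - 1).toNat := by
        rw [ff, if_neg (by omega)]
      rw [h1, h2]
      apply npow_odd
      rw [Nat.odd_iff]
      omega
    rw [hff]
    ring
  · -- symmetry
    intro n
    show ff (((s : ℤ) - n) * e % m) * ff (e % m)
        = ff (((s : ℤ) + 1 + n) * e % m) * ff (e % m)
    have hx2 : (s : ℤ) + 1 + n = d - ((s : ℤ) - n) := by rw [hd_def]; ring
    rw [hx2]
    generalize (s : ℤ) - n = x
    have hrb : 0 ≤ x * e % m ∧ x * e % m < m := hrange x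
    obtain ⟨c, hc⟩ := hdvd2 x
    obtain ⟨c1, hc1⟩ := hde
    set r : ℤ := x * e % m with hr_def
    congr 1
    rcases eq_or_ne m 1 with hm1 | hm1
    · have hr0 : r = 0 := by rw [hr_def, hm1, Int.emod_one]
      rw [hm1, hr0]
      simp [Int.emod_one]
    rcases eq_or_ne r 0 with hr0 | hr0
    · have hk : (d - x) * e % m = 1 :=
        hkey _ _ (by omega) (by omega) ⟨c1 - c, by linear_combination hc1 - hc - hr0⟩
      rw [hk, hr0]
      norm_num [ff]
    rcases eq_or_ne r 1 with hr1 | hr1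
    · have hk : (d - x) * e % m = 0 :=
        hkey _ _ (by omega) (by omega) ⟨c1 - c, by linear_combination hc1 - hc - hr1⟩
      rw [hk, hr1]
      norm_num [ff]
    · have hk : (d - x) * e % m = m + 1 - r :=
        hkey _ _ (by omega) (by omega) ⟨c1 - c - 1, by linear_combination hc1 - hc⟩
      rw [hk]
      have h1 : ff r = (-1 : ℤ) ^ (r - 1).toNat := by rw [ff, if_neg hr0]
      have h2 : ff (m + 1 - r) = (-1 : ℤ) ^ (m - r).toNat := by
        rw [ff, if_neg (by omega)]
        congr 2
        omega
      rw [h1, h2]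
      symm
      apply npow_even
      rw [Nat.even_iff]
      omega
  · -- uniqueness
    intro b' hb'
    obtain ⟨hpm, hper, h1, hanti, hsym⟩ := hb'
    rw [← hm_def] at hper hanti
    have htrans : ∀ (c : ℤ) (x : ℤ), b' (x + c * m) = b' x := by
      intro c
      induction c using Int.induction_on with
      | zero => simp
      | succ i ih =>
        intro x
        have h2 : x + ((i : ℤ) + 1) * m = (x + (i : ℤ) * m) + m := by ring
        rw [h2, hper, ih]
      | pred i ih =>
        intro x
        have h2 : x + (-(i : ℤ) - 1) * m = (x - m) + (-(i : ℤ)) * m := by ring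
        rw [h2, ih]
        have h3 := hper (x - m)
        rw [show x - m + m = x by ring] at h3
        exact h3.symm
    have hco : ∀ x y : ℤ, m ∣ x - y → b' x = b' y := by
      rintro x y ⟨c, hc⟩
      have h2 : x = y + c * m := by linarith
      rw [h2, htrans]
    have hsym' : ∀ x : ℤ, b' x = b' (d - x) := by
      intro x
      have h2 := hsym ((s : ℤ) - x)
      rw [show (s : ℤ) - ((s : ℤ) - x) = x by ring,
        show (s : ℤ) + 1 + ((s : ℤ) - x) = d - x + m * 0 by rw [hd_def]; ring] at h2
      simpa using h2
    have hstep : ∀ y : ℤ, ¬ m ∣ y → b' (y + d) = - b' y := by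
      intro y hy
      have e1 : b' (y + d) = b' (-y) := by
        have h2 := hsym' (-y)
        rw [show d - -y = y + d by ring] at h2
        exact h2.symm
      have e2 : b' (-y) = b' (m - y) := hco _ _ ⟨-1, by ring⟩
      have e3 : b' y = - b' (m - y) := hanti y hy
      rw [e1, e2]
      linarith
    have hndvd : ∀ j : ℤ, 1 ≤ j → j ≤ m - 1 → ¬ m ∣ j * d := by
      intro j hj1 hj2 hdv
      have h2 : m ∣ j := hcop_md.dvd_of_dvd_mul_right hdv
      have := Int.le_of_dvd (by omega) h2
      omega
    have hchain : ∀ j : ℕ, 1 ≤ j → (j : ℤ) ≤ m - 1 →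
        b' ((j : ℤ) * d) = (-1 : ℤ) ^ (j - 1) * b' d := by
      intro j
      induction j with
      | zero => omega
      | succ i ih =>
        intro _ hj
        rcases Nat.eq_zero_or_pos i with rfl | hi
        · simp
        · have hi' : (i : ℤ) ≤ m - 1 := by push_cast at hj ⊢; omega
          have h2 : (((i : ℕ) + 1 : ℕ) : ℤ) * d = (i : ℤ) * d + d := by push_cast; ring
          rw [h2, hstep _ (hndvd (i : ℤ) (by exact_mod_cast hi) hi'), ih hi hi']
          rw [show i + 1 - 1 = (i - 1) + 1 by omega, pow_succ]
          ring
    have hb0 : b' 0 = b' d := by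
      rcases eq_or_ne m 1 with hm1 | hm1
      · exact hco 0 d ⟨-d, by rw [hm1]; ring⟩
      · have hl1 : 1 ≤ l := by omega
        have hlm : (l : ℤ) ≤ m - 1 := by omega
        have hA := hchain l hl1 hlm
        have h2 := hstep ((l : ℤ) * d) (hndvd _ (by exact_mod_cast hl1) hlm)
        have h0 : b' 0 = b' ((l : ℤ) * d + d) := hco _ _ ⟨-d, by rw [hm_def]; ring⟩
        have hle : (-1 : ℤ) ^ (l - 1) = -1 := by
          apply Odd.neg_one_pow
          rw [Nat.odd_iff]
          omega
        rw [h0, h2, hA, hle]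
        ring
    have hC : ∀ j : ℕ, (j : ℤ) ≤ m - 1 → b' ((j : ℤ) * d) = ff (j : ℤ) * b' d := by
      intro j hj
      rcases Nat.eq_zero_or_pos j with rfl | hj1
      · simpa [ff] using hb0
      · rw [hchain j hj1 hj]
        congr 1
        rw [ff, if_neg (by exact_mod_cast Nat.pos_iff_ne_zero.mp hj1)]
        congr 1
        omega
    have hCint : ∀ r : ℤ, 0 ≤ r → r < m → b' (r * d) = ff r * b' d := by
      intro r h0 h1
      have h2 := hC r.toNat (by omega)
      rwa [Int.toNat_of_nonneg h0] at h2
    obtain ⟨c1, hc1⟩ := hde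
    have hbd : b' d = ff (e % m) := by
      obtain ⟨c, hc⟩ := hdvd2 1
      rw [one_mul] at hc
      have hr := hrange 1
      rw [one_mul] at hr
      have h1d : b' 1 = b' ((e % m) * d) :=
        hco _ _ ⟨d * c - c1, by linear_combination d * hc - hc1⟩
      rw [h1, hCint _ hr.1 hr.2] at h1d
      rcases ff_pm (e % m) with h | h <;> rw [h] at h1d ⊢ <;> linarith
    funext n
    show b' n = ff (n * e % m) * ff (e % m)
    obtain ⟨c, hc⟩ := hdvd2 n
    have hr := hrange n
    have h2 : b' n = b' ((n * e % m) * d) :=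
      hco _ _ ⟨d * c - n * c1, by linear_combination d * hc - n * hc1⟩
    rw [h2, hCint _ hr.1 hr.2, hbd]
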